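/- Let Q = [0,1]^n, and for each k let 𝒬_k ⊆ Q be a compact set that is a disjoint union of 2^{kn} closed cubes of edge length α_k = (2^{k+1}−1)^{-1}, with 𝒬_{k+1} ⊆ 𝒬_k. Then A = ∩_k 𝒬_k is a compact set of Lebesgue measure 2^{-n}. -/

import Mathlib

open MeasureTheory Metric Set Filter Topology

noncomputable section

abbrev Euc (n : ℕ) := EuclideanSpace ℝ (Fin n)

def unitCube (n : ℕ) : Set (Euc n) := {x | ∀ i, x i ∈ Set.Icc (0:ℝ) 1}

/-- Closed cube with lower corner `a` and edge length `s`. -/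
def cube (n : ℕ) (a : Euc n) (s : ℝ) : Set (Euc n) :=
  {x | ∀ j, x j ∈ Set.Icc (a j) (a j + s)}

lemma volume_cube (n : ℕ) (a : Euc n) (s : ℝ) :
    volume (cube n a s) = ENNReal.ofReal s ^ n := by
  have hset : cube n a s = ((MeasurableEquiv.toLp 2 (Fin n → ℝ)).symm) ⁻¹'
      (Set.univ.pi fun j => Icc (a j) (a j + s)) := by
    ext x; simp [cube, Pi.le_def, forall_and]
  rw [hset, (EuclideanSpace.volume_preserving_symm_measurableEquiv_toLp (Fin n)).measure_preimage
      (MeasurableSet.univ_pi fun j => measurableSet_Icc).nullMeasurableSet,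
    volume_pi_pi]
  simp [Real.volume_Icc]

lemma measurableSet_cube (n : ℕ) (a : Euc n) (s : ℝ) : MeasurableSet (cube n a s) := by
  have : cube n a s = ⋂ j, {x : Euc n | x j ∈ Icc (a j) (a j + s)} := by
    ext x; simp [cube]
  rw [this]
  exact MeasurableSet.iInter fun j =>
    ((measurable_pi_apply j).comp (MeasurableEquiv.toLp 2 (Fin n → ℝ)).symm.measurable) measurableSet_Icc


theorem stmt12 (n : ℕ) (𝒬 : ℕ → Set (Euc n)) (α : ℕ → ℝ)
    (hα : ∀ k, α k = ((2:ℝ) ^ (k + 1) - 1)⁻¹)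
    (hcpt : ∀ k, IsCompact (𝒬 k)) (hsub : ∀ k, 𝒬 k ⊆ unitCube n)
    (hanti : ∀ k, 𝒬 (k + 1) ⊆ 𝒬 k)
    (hstruct : ∀ k, ∃ c : Fin (2 ^ (k * n)) → Euc n,
      (𝒬 k = ⋃ i, cube n (c i) (α k)) ∧
      (∀ i j, i ≠ j → Disjoint (cube n (c i) (α k)) (cube n (c j) (α k)))) :
    IsCompact (⋂ k, 𝒬 k) ∧ volume (⋂ k, 𝒬 k) = (2 : ENNReal)⁻¹ ^ n := by
  have hαpos : ∀ k, 0 < α k := by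
    intro k
    rw [hα k]
    have : (1:ℝ) < 2 ^ (k+1) := one_lt_pow₀ one_lt_two (Nat.succ_ne_zero k)
    exact inv_pos.mpr (by linarith)
  -- volume of each 𝒬 k
  have hvol : ∀ k, volume (𝒬 k) = ENNReal.ofReal (2 ^ k * α k) ^ n := by
    intro k
    obtain ⟨c, hc, hdisj⟩ := hstruct k
    rw [hc, measure_iUnion (fun i j hij => hdisj i j hij)
      (fun i => measurableSet_cube n (c i) (α k))]
    simp only [volume_cube n _ _]
    rw [tsum_fintype]
    simp only [Finset.sum_const, Finset.card_univ, Fintype.card_fin, nsmul_eq_mul]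
    rw [ENNReal.ofReal_mul (by positivity), mul_pow]
    congr 1
    rw [← ENNReal.ofReal_pow (by positivity), ← pow_mul]
    push_cast
    rw [ENNReal.ofReal_pow (by norm_num)]
    norm_num
  -- limit of volumes
  have hanti' : Antitone 𝒬 := antitone_nat_of_succ_le hanti
  have htend : Tendsto (fun k => volume (𝒬 k)) atTop (𝓝 (volume (⋂ k, 𝒬 k))) := by
    refine tendsto_measure_iInter_atTop (fun k => (hcpt k).isClosed.measurableSet.nullMeasurableSet)
      hanti' ⟨0, ?_⟩
    exact ((hcpt 0).measure_lt_top).ne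
  -- explicit limit
  have hreal : Tendsto (fun k : ℕ => (2:ℝ) ^ k * α k) atTop (𝓝 (1/2)) := by
    have heq : ∀ k : ℕ, (2:ℝ) ^ k * α k = (2 - (1/2:ℝ) ^ k)⁻¹ := by
      intro k
      rw [hα k]
      have h1 : ((2:ℝ) ^ (k+1) - 1) ≠ 0 := by
        have : (1:ℝ) < 2 ^ (k+1) := one_lt_pow₀ one_lt_two (Nat.succ_ne_zero k)
        linarith
      have h2 : ((2:ℝ)) ^ k ≠ 0 := by positivity
      have h3 : (2:ℝ) - (1/2) ^ k = (2 ^ (k+1) - 1) / 2 ^ k := by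
        field_simp
        rw [sub_mul, ← mul_pow]
        ring
      rw [h3, inv_div, div_eq_mul_inv, mul_comm]
    simp only [heq]
    have : Tendsto (fun k : ℕ => (2:ℝ) - (1/2) ^ k) atTop (𝓝 (2 - 0)) :=
      tendsto_const_nhds.sub (tendsto_pow_atTop_nhds_zero_of_lt_one (by norm_num) (by norm_num))
    have := this.inv₀ (by norm_num)
    norm_num at this ⊢
    exact this
  have htend2 : Tendsto (fun k => volume (𝒬 k)) atTop (𝓝 ((2:ENNReal)⁻¹ ^ n)) := by
    simp only [hvol]
    have h2 : (2:ENNReal)⁻¹ = ENNReal.ofReal (1/2) := by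
      rw [ENNReal.ofReal_div_of_pos (by norm_num)]
      norm_num
    rw [h2]
    exact ENNReal.Tendsto.pow ((ENNReal.continuous_ofReal.tendsto _).comp hreal)
  refine ⟨(hcpt 0).of_isClosed_subset (isClosed_iInter fun k => (hcpt k).isClosed)
      (iInter_subset _ 0), tendsto_nhds_unique htend htend2⟩
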